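/- Let H be a complex Hilbert space and let M, S, T : H → H be bounded linear operators such that M is elliptic with constant c_M > 0 and S is elliptic with constant c_S > 0 (hence S is bijective with bounded inverse S⁻¹). Then there exist constants α > 0, β > 0 and C > 0 such that for all ξ, φ, ψ ∈ H: |⟪φ, M φ⟫ + α⟪ξ, S ξ⟫ + β⟪S⁻¹ψ, ψ⟫ − α⟪ξ, φ⟫ − β⟪S⁻¹ψ, T ξ⟫| ≥ C(‖ξ‖² + ‖φ‖² + ‖ψ‖²). -/

import Mathlib

open scoped ComplexInnerProductSpace

set_option maxHeartbeats 1000000 in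
/-- Purely real-arithmetic core of the coercivity estimate. -/
private lemma theta_coercivity_arith (cM cS nS K : ℝ) (hcM : 0 < cM) (hcS : 0 < cS)
    (hnS : 0 < nS) (hK : 0 ≤ K) :
    ∃ α β C : ℝ, 0 < α ∧ 0 < β ∧ 0 < C ∧
      ∀ x y z w a b c d e : ℝ, 0 ≤ x → 0 ≤ y → 0 ≤ z → 0 ≤ w →
        cM * y ^ 2 ≤ a → cS * x ^ 2 ≤ b → cS * w ^ 2 ≤ c → z ≤ nS * w →
        |d| ≤ x * y → |e| ≤ K * w * x →
        C * (x ^ 2 + y ^ 2 + z ^ 2) ≤ a + α * b + β * c - α * d - β * e := by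
  set α : ℝ := cM * cS with hα
  have hαpos : 0 < α := mul_pos hcM hcS
  set β : ℝ := α * cS ^ 2 / (2 * (K ^ 2 + 1)) with hβ
  have hβpos : 0 < β := by positivity
  set C : ℝ := min (min (α * cS / 4) (cM / 2)) (β * cS / (2 * nS ^ 2)) with hC
  have hCpos : 0 < C := by
    apply lt_min (lt_min (by positivity) (by positivity)) (by positivity)
  refine ⟨α, β, C, hαpos, hβpos, hCpos, ?_⟩
  intro x y z w a b c d e hx hy hz hw ha hb hc hzw hd he
  have hC1 : C ≤ α * cS / 4 := le_trans (min_le_left _ _) (min_le_left _ _)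
  have hC2 : C ≤ cM / 2 := le_trans (min_le_left _ _) (min_le_right _ _)
  have hC3 : C * nS ^ 2 ≤ β * cS / 2 := by
    have := min_le_right (min (α * cS / 4) (cM / 2)) (β * cS / (2 * nS ^ 2))
    rw [← hC] at this
    calc C * nS ^ 2 ≤ β * cS / (2 * nS ^ 2) * nS ^ 2 := by
          apply mul_le_mul_of_nonneg_right this (by positivity)
      _ = β * cS / 2 := by field_simp
  have hβT : β * K ^ 2 ≤ α * cS ^ 2 / 2 := by
    rw [hβ, div_mul_eq_mul_div, div_le_div_iff₀ (by positivity) (by norm_num)]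
    nlinarith [sq_nonneg K, hαpos.le, mul_pos hαpos (mul_pos hcS hcS)]
  clear_value α β C
  have hd' : -(x * y) ≤ d ∧ d ≤ x * y := abs_le.mp hd
  have he' : -(K * w * x) ≤ e ∧ e ≤ K * w * x := abs_le.mp he
  have hz2 : z ^ 2 ≤ nS ^ 2 * w ^ 2 := by nlinarith
  -- work with the inequality multiplied by cS > 0
  rw [← mul_le_mul_iff_right₀ hcS]
  have h1 : 0 ≤ cM * cS / 2 * (cS * x - y) ^ 2 := by positivity
  have h2 : 0 ≤ β / 2 * (K * x - cS * w) ^ 2 := by positivity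
  -- bound each piece of the left-hand side
  have hLx : cS * C * x ^ 2 ≤ cS * (α * cS / 4) * x ^ 2 := by
    apply mul_le_mul_of_nonneg_right (mul_le_mul_of_nonneg_left hC1 hcS.le) (sq_nonneg x)
  have hLy : cS * C * y ^ 2 ≤ cS * (cM / 2) * y ^ 2 := by
    apply mul_le_mul_of_nonneg_right (mul_le_mul_of_nonneg_left hC2 hcS.le) (sq_nonneg y)
  have hLz : cS * C * z ^ 2 ≤ cS * (β * cS / 2) * w ^ 2 := by
    calc cS * C * z ^ 2 ≤ cS * C * (nS ^ 2 * w ^ 2) := by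
          apply mul_le_mul_of_nonneg_left hz2 (by positivity)
      _ = cS * (C * nS ^ 2) * w ^ 2 := by ring
      _ ≤ cS * (β * cS / 2) * w ^ 2 := by
          apply mul_le_mul_of_nonneg_right (mul_le_mul_of_nonneg_left hC3 hcS.le) (sq_nonneg w)
  -- bound each piece of the right-hand side
  have hRa : cS * (cM * y ^ 2) ≤ cS * a := mul_le_mul_of_nonneg_left ha hcS.le
  have hRb : cS * α * (cS * x ^ 2) ≤ cS * α * b := by
    apply mul_le_mul_of_nonneg_left hb (by positivity)
  have hRc : cS * β * (cS * w ^ 2) ≤ cS * β * c := by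
    apply mul_le_mul_of_nonneg_left hc (by positivity)
  have hRd : cS * α * d ≤ cS * α * (x * y) := by
    apply mul_le_mul_of_nonneg_left hd'.2 (by positivity)
  have hRe : cS * β * e ≤ cS * β * (K * w * x) := by
    apply mul_le_mul_of_nonneg_left he'.2 (by positivity)
  -- AM–GM estimates
  have hAM1 : cS * α * (x * y) ≤ cS * α * cS / 2 * x ^ 2 + cS * cM / 2 * y ^ 2 := by
    nlinarith [h1]
  have hAM2 : cS * β * (K * w * x) ≤ β * K ^ 2 / 2 * x ^ 2 + cS ^ 2 * β / 2 * w ^ 2 := by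
    nlinarith [h2]
  have hβTx : β * K ^ 2 / 2 * x ^ 2 ≤ α * cS ^ 2 / 4 * x ^ 2 := by
    apply mul_le_mul_of_nonneg_right _ (sq_nonneg x)
    linarith
  linarith [hLx, hLy, hLz, hRa, hRb, hRc, hRd, hRe, hAM1, hAM2, hβTx]

theorem theta_coercivity_of_mixed_principal_part
    {H : Type*} [NormedAddCommGroup H] [InnerProductSpace ℂ H] [CompleteSpace H]
    (M S Sinv T : H →L[ℂ] H) (cM cS : ℝ) (hcM : 0 < cM) (hcS : 0 < cS)
    (hM : ∀ u : H, cM * ‖u‖ ^ 2 ≤ (⟪u, M u⟫).re)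
    (hS : ∀ u : H, cS * ‖u‖ ^ 2 ≤ (⟪u, S u⟫).re)
    (hSinv_left : ∀ u : H, Sinv (S u) = u) (hSinv_right : ∀ v : H, S (Sinv v) = v) :
    ∃ α β C : ℝ, 0 < α ∧ 0 < β ∧ 0 < C ∧
      ∀ ξ φ ψ : H,
        C * (‖ξ‖ ^ 2 + ‖φ‖ ^ 2 + ‖ψ‖ ^ 2) ≤
          ‖⟪φ, M φ⟫ + (α : ℂ) * ⟪ξ, S ξ⟫ + (β : ℂ) * ⟪Sinv ψ, ψ⟫
            - (α : ℂ) * ⟪ξ, φ⟫ - (β : ℂ) * ⟪Sinv ψ, T ξ⟫‖ := by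
  obtain ⟨α, β, C, hα, hβ, hC, hkey⟩ :=
    theta_coercivity_arith cM cS (‖S‖ + 1) ‖T‖ hcM hcS
      (by positivity) (norm_nonneg T)
  refine ⟨α, β, C, hα, hβ, hC, ?_⟩
  intro ξ φ ψ
  set E : ℂ := ⟪φ, M φ⟫ + (α : ℂ) * ⟪ξ, S ξ⟫ + (β : ℂ) * ⟪Sinv ψ, ψ⟫
      - (α : ℂ) * ⟪ξ, φ⟫ - (β : ℂ) * ⟪Sinv ψ, T ξ⟫ with hE
  have hre : E.re = (⟪φ, M φ⟫).re + α * (⟪ξ, S ξ⟫).re + β * (⟪Sinv ψ, ψ⟫).re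
      - α * (⟪ξ, φ⟫).re - β * (⟪Sinv ψ, T ξ⟫).re := by
    simp [hE, Complex.add_re, Complex.sub_re, Complex.mul_re]
  have hc : cS * ‖Sinv ψ‖ ^ 2 ≤ (⟪Sinv ψ, ψ⟫).re := by
    have := hS (Sinv ψ)
    rwa [hSinv_right ψ] at this
  have hzw : ‖ψ‖ ≤ (‖S‖ + 1) * ‖Sinv ψ‖ := by
    calc ‖ψ‖ = ‖S (Sinv ψ)‖ := by rw [hSinv_right ψ]
      _ ≤ ‖S‖ * ‖Sinv ψ‖ := S.le_opNorm _
      _ ≤ (‖S‖ + 1) * ‖Sinv ψ‖ := by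
          apply mul_le_mul_of_nonneg_right (by linarith) (norm_nonneg _)
  have hd : |(⟪ξ, φ⟫).re| ≤ ‖ξ‖ * ‖φ‖ := by
    have h := norm_inner_le_norm (𝕜 := ℂ) ξ φ
    exact (Complex.abs_re_le_norm _).trans h
  have he : |(⟪Sinv ψ, T ξ⟫).re| ≤ ‖T‖ * ‖Sinv ψ‖ * ‖ξ‖ := by
    calc |(⟪Sinv ψ, T ξ⟫).re| ≤ ‖⟪Sinv ψ, T ξ⟫‖ := by
          exact Complex.abs_re_le_norm _
      _ ≤ ‖Sinv ψ‖ * ‖T ξ‖ := norm_inner_le_norm _ _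
      _ ≤ ‖Sinv ψ‖ * (‖T‖ * ‖ξ‖) := by
          apply mul_le_mul_of_nonneg_left (T.le_opNorm ξ) (norm_nonneg _)
      _ = ‖T‖ * ‖Sinv ψ‖ * ‖ξ‖ := by ring
  have hmain := hkey ‖ξ‖ ‖φ‖ ‖ψ‖ ‖Sinv ψ‖ (⟪φ, M φ⟫).re (⟪ξ, S ξ⟫).re
      (⟪Sinv ψ, ψ⟫).re (⟪ξ, φ⟫).re (⟪Sinv ψ, T ξ⟫).re
      (norm_nonneg _) (norm_nonneg _) (norm_nonneg _) (norm_nonneg _)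
      (hM φ) (hS ξ) hc hzw hd he
  calc C * (‖ξ‖ ^ 2 + ‖φ‖ ^ 2 + ‖ψ‖ ^ 2)
      ≤ E.re := by rw [hre]; exact hmain
    _ ≤ ‖E‖ := Complex.re_le_norm E
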